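/- Let G be the group with presentation ⟨A, B : A^m = B^n = 1, B A B^{-1} = A^r⟩, where gcd((r-1)n, m) = 1 and r^n ≡ 1 (mod m). Let d be the multiplicative order of r modulo m. Then the subgroup H generated by A and B^d is a normal cyclic subgroup of G of index d. -/

import Mathlib

lemma aux_closure_pair {G : Type*} [Group G] {a b : G}
    (h : Commute a b)
    (hco : Nat.Coprime (orderOf a) (orderOf b)) :
    Subgroup.closure {a, b} = Subgroup.zpowers (a * b) := by
  apply le_antisymm
  · rw [Subgroup.closure_le]
    obtain ⟨k, hk1, hk2⟩ := Nat.chineseRemainder hco 1 0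
    obtain ⟨l, hl1, hl2⟩ := Nat.chineseRemainder hco 0 1
    have hamem : a ∈ Subgroup.zpowers (a * b) := ⟨(k : ℤ), by
      show (a*b)^(k:ℤ) = a
      rw [zpow_natCast, h.mul_pow, pow_eq_pow_iff_modEq.2 hk1, pow_eq_pow_iff_modEq.2 hk2,
        pow_one, pow_zero, mul_one]⟩
    have hbmem : b ∈ Subgroup.zpowers (a * b) := ⟨(l : ℤ), by
      show (a*b)^(l:ℤ) = b
      rw [zpow_natCast, h.mul_pow, pow_eq_pow_iff_modEq.2 hl1,
        pow_eq_pow_iff_modEq.2 hl2, pow_one, pow_zero, one_mul]⟩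
    intro x hx
    rcases hx with rfl | hx
    · exact hamem
    · rcases hx with rfl; exact hbmem
  · rw [Subgroup.zpowers_eq_closure, Subgroup.closure_le]
    intro x hx
    rcases hx with rfl
    exact mul_mem (Subgroup.subset_closure (by simp)) (Subgroup.subset_closure (by simp))

lemma aux_isCyclic_zpowers {G : Type*} [Group G] (g : G) :
    IsCyclic (Subgroup.zpowers g) := by
  refine ⟨⟨g, Subgroup.mem_zpowers g⟩, ?_⟩
  rintro ⟨y, hy⟩
  obtain ⟨k, rfl⟩ := Subgroup.mem_zpowers_iff.1 hy
  exact ⟨k, Subtype.ext (by simp)⟩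

theorem burnside_presentation_normal_cyclic_subgroup_of_index_d
    (m n : ℕ) (hm : 0 < m) (hn : 0 < n) (r : ℤ)
    (hgcd : Int.gcd ((r - 1) * n) m = 1) (hrn : r ^ n ≡ 1 [ZMOD (m : ℤ)])
    (rels : Set (FreeGroup (Fin 2)))
    (hrels : rels = {FreeGroup.of 0 ^ m, FreeGroup.of 1 ^ n,
      FreeGroup.of 1 * FreeGroup.of 0 * (FreeGroup.of 1)⁻¹ * (FreeGroup.of 0 ^ r)⁻¹})
    (A B : PresentedGroup rels) (hA : A = PresentedGroup.of 0)
    (hB : B = PresentedGroup.of 1)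
    (d : ℕ) (hd : d = orderOf ((r : ZMod m)))
    (H : Subgroup (PresentedGroup rels)) (hH : H = Subgroup.closure {A, B ^ d}) :
    H.Normal ∧ IsCyclic H ∧ H.index = d := by
  -- relations
  have key : ∀ w ∈ rels, PresentedGroup.mk rels w = 1 := fun w hw =>
    (QuotientGroup.eq_one_iff w).2 (Subgroup.subset_normalClosure hw)
  have relA : A ^ m = 1 := by
    rw [hA]
    have := key _ (show _ ∈ rels by rw [hrels]; left; rfl)
    rwa [map_pow] at this
  have relB : B ^ n = 1 := by
    rw [hB]
    have := key _ (show _ ∈ rels by rw [hrels]; right; left; rfl)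
    rwa [map_pow] at this
  have relC : B * A * B⁻¹ = A ^ r := by
    rw [hA, hB]
    have := key _ (show _ ∈ rels by rw [hrels]; right; right; rfl)
    rw [map_mul, map_mul, map_inv, map_inv, map_zpow, mul_inv_eq_one] at this
    exact this
  -- arithmetic facts
  have hrZ : ((r : ZMod m)) ^ n = 1 := by
    have := (ZMod.intCast_eq_intCast_iff (r ^ n) 1 m).2 hrn
    push_cast at this
    simpa using this
  have hd0 : 0 < d := by
    rw [hd]
    exact (isOfFinOrder_iff_pow_eq_one.2 ⟨n, hn, hrZ⟩).orderOf_pos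
  have hdn : d ∣ n := hd ▸ orderOf_dvd_of_pow_eq_one hrZ
  have hrd : r ^ d ≡ 1 [ZMOD (m : ℤ)] := by
    have h1 : ((r : ZMod m)) ^ d = 1 := hd ▸ pow_orderOf_eq_one _
    have h2 : (((r ^ d : ℤ)) : ZMod m) = ((1 : ℤ) : ZMod m) := by push_cast; simpa using h1
    exact (ZMod.intCast_eq_intCast_iff _ _ _).1 h2
  have hcoprime_rm : IsCoprime r (m : ℤ) := by
    obtain ⟨k, hk⟩ := Int.ModEq.dvd hrn.symm
    refine ⟨r ^ (n - 1), -k, ?_⟩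
    have h1 : r ^ (n-1) * r = r ^ n := by
      rw [← pow_succ]
      congr 1
      omega
    rw [h1]
    linarith
  have hcop_mn : Nat.Coprime m n := by
    have h1 : Int.gcd (n : ℤ) (m : ℤ) ∣ Int.gcd ((r - 1) * n) m :=
      Int.gcd_dvd_gcd_mul_left_left _ _ _
    rw [hgcd, Nat.dvd_one, Int.gcd_natCast_natCast] at h1
    exact (Nat.coprime_comm).1 h1
  -- order of A divides m
  have hOA : orderOf A ∣ m := orderOf_dvd_of_pow_eq_one relA
  have hOAz : ((orderOf A : ℤ)) ∣ (m : ℤ) := Int.natCast_dvd_natCast.2 hOA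
  have zpow_cong : ∀ s t : ℤ, s ≡ t [ZMOD (m : ℤ)] → A ^ s = A ^ t := by
    intro s t hst
    exact zpow_eq_zpow_iff_modEq.2 (hst.of_dvd hOAz)
  -- conjugation formula
  have conj_pow : ∀ k : ℕ, B ^ k * A * (B ^ k)⁻¹ = A ^ (r ^ k) := by
    intro k
    induction k with
    | zero => simp
    | succ k ih =>
      have h1 : B ^ (k+1) * A * (B ^ (k+1))⁻¹ = B * (B ^ k * A * (B ^ k)⁻¹) * B⁻¹ := by
        group
      rw [h1, ih]
      have h2 : B * A ^ (r ^ k) * B⁻¹ = (B * A * B⁻¹) ^ (r ^ k) := conj_zpow.symm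
      rw [h2, relC, ← zpow_mul]
      congr 1
      rw [pow_succ]
      ring
  -- A commutes with B^d
  have hcomm : Commute A (B ^ d) := by
    have h1 : B ^ d * A * (B ^ d)⁻¹ = A ^ (r ^ d) := conj_pow d
    have h2 : A ^ (r ^ d) = A := by
      have := zpow_cong (r ^ d) 1 hrd
      rwa [zpow_one] at this
    rw [h2] at h1
    have h3 : B ^ d * A = A * B ^ d := by
      calc B ^ d * A = (B ^ d * A * (B ^ d)⁻¹) * B ^ d := by group
        _ = A * B ^ d := by rw [h1]
    exact (Commute.eq h3).symm
  -- coprime orders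
  have hOB : orderOf (B ^ d) ∣ n := by
    apply orderOf_dvd_of_pow_eq_one
    rw [← pow_mul, mul_comm, pow_mul, relB, one_pow]
  have hcop_ord : Nat.Coprime (orderOf A) (orderOf (B ^ d)) :=
    Nat.Coprime.coprime_dvd_left hOA (Nat.Coprime.coprime_dvd_right hOB hcop_mn)
  -- H is cyclic
  have hHz : H = Subgroup.zpowers (A * B ^ d) := by
    rw [hH]; exact aux_closure_pair hcomm hcop_ord
  have hcyc : IsCyclic H := by
    rw [hHz]; exact aux_isCyclic_zpowers _
  -- normality
  have norm_of_map : ∀ g : PresentedGroup rels,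
      Subgroup.map (MulAut.conj g).toMonoidHom H = H → g ∈ Subgroup.normalizer (H : Set (PresentedGroup rels)) := by
    intro g hg
    rw [Subgroup.mem_normalizer_iff]
    intro h
    constructor
    · intro hh
      have h2 : (MulAut.conj g).toMonoidHom h ∈ Subgroup.map (MulAut.conj g).toMonoidHom H :=
        Subgroup.mem_map_of_mem _ hh
      rw [hg] at h2
      simpa [MulAut.conj_apply] using h2
    · intro hh
      rw [← hg] at hh
      obtain ⟨h', hh', he⟩ := hh
      have h3 : h' = h := by
        simp only [MulEquiv.coe_toMonoidHom, MulAut.conj_apply] at he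
        exact mul_left_cancel (mul_right_cancel he)
      rwa [← h3]
  have hAr_closure : Subgroup.closure ({A ^ r, B ^ d} : Set (PresentedGroup rels))
      = Subgroup.closure {A, B ^ d} := by
    apply le_antisymm
    · rw [Subgroup.closure_le]
      intro x hx
      rcases hx with rfl | hx
      · exact Subgroup.zpow_mem _ (Subgroup.subset_closure (by simp)) r
      · rcases hx with rfl
        exact Subgroup.subset_closure (by simp)
    · rw [Subgroup.closure_le]
      intro x hx
      rcases hx with h | h
      · -- A ∈ closure {A^r, B^d}
        rw [h]
        obtain ⟨u, v, huv⟩ := hcoprime_rm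
        have hAm : A ^ ((m : ℤ)) = 1 := by rw [zpow_natCast, relA]
        have hAe : A = (A ^ r) ^ u := by
          calc A = A ^ (u * r + v * m) := by rw [huv, zpow_one]
            _ = A ^ (r * u) * A ^ ((m:ℤ) * v) := by
                rw [← zpow_add]; congr 1; ring
            _ = (A ^ r) ^ u * (A ^ (m:ℤ)) ^ v := by rw [zpow_mul, zpow_mul]
            _ = (A ^ r) ^ u := by rw [hAm, one_zpow, mul_one]
        have hmem : (A ^ r) ^ u ∈ Subgroup.closure ({A ^ r, B ^ d} : Set (PresentedGroup rels)) :=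
          Subgroup.zpow_mem _ (Subgroup.subset_closure (by simp)) u
        rwa [← hAe] at hmem
      · rw [h]
        exact Subgroup.subset_closure (by simp)
  have hnorm : H.Normal := by
    rw [← Subgroup.normalizer_eq_top_iff, eq_top_iff]
    intro x _
    refine PresentedGroup.generated_by rels (Subgroup.normalizer (H : Set (PresentedGroup rels))) ?_ x
    intro j
    fin_cases j
    · -- generator A
      show PresentedGroup.of 0 ∈ Subgroup.normalizer (H : Set (PresentedGroup rels))
      rw [← hA]
      apply norm_of_map
      rw [hH, MonoidHom.map_closure, Set.image_pair]
      have e1 : (MulAut.conj A).toMonoidHom A = A := by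
        simp [MulAut.conj_apply]
      have e2 : (MulAut.conj A).toMonoidHom (B ^ d) = B ^ d := by
        simp only [MulEquiv.coe_toMonoidHom, MulAut.conj_apply]
        rw [hcomm.eq, mul_inv_cancel_right]
      rw [e1, e2]
    · -- generator B
      show PresentedGroup.of 1 ∈ Subgroup.normalizer (H : Set (PresentedGroup rels))
      rw [← hB]
      apply norm_of_map
      rw [hH, MonoidHom.map_closure, Set.image_pair]
      have e1 : (MulAut.conj B).toMonoidHom A = A ^ r := by
        simp only [MulEquiv.coe_toMonoidHom, MulAut.conj_apply]
        exact relC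
      have e2 : (MulAut.conj B).toMonoidHom (B ^ d) = B ^ d := by
        simp only [MulEquiv.coe_toMonoidHom, MulAut.conj_apply]
        group
      rw [e1, e2, hAr_closure]
  haveI := hnorm
  -- index upper bound
  let π : PresentedGroup rels →* PresentedGroup rels ⧸ H := QuotientGroup.mk' H
  have hπA : π A = 1 := (QuotientGroup.eq_one_iff _).2 (hH ▸ Subgroup.subset_closure (by simp))
  have hπBd : (π B) ^ d = 1 := by
    rw [← map_pow]
    exact (QuotientGroup.eq_one_iff _).2 (hH ▸ Subgroup.subset_closure (by simp))
  have htop : ∀ y : PresentedGroup rels ⧸ H, y ∈ Subgroup.zpowers (π B) := by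
    intro y
    obtain ⟨g, rfl⟩ := QuotientGroup.mk'_surjective H y
    have hg : g ∈ (Subgroup.zpowers (π B)).comap π := by
      refine PresentedGroup.generated_by rels _ ?_ g
      intro j
      fin_cases j
      · show PresentedGroup.of 0 ∈ (Subgroup.zpowers (π B)).comap π
        rw [Subgroup.mem_comap, ← hA, hπA]
        exact one_mem _
      · show PresentedGroup.of 1 ∈ (Subgroup.zpowers (π B)).comap π
        rw [Subgroup.mem_comap, ← hB]
        exact Subgroup.mem_zpowers _
    exact hg
  have hupper : H.index ∣ d := by
    have hc : H.index = orderOf (π B) := by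
      rw [Subgroup.index_eq_card, ← Nat.card_zpowers]
      have h4 : Subgroup.zpowers (π B) = ⊤ := by
        rw [eq_top_iff]; intro y _; exact htop y
      rw [h4, Subgroup.card_top]
    rw [hc]
    exact orderOf_dvd_of_pow_eq_one hπBd
  -- index lower bound
  haveI : NeZero d := ⟨hd0.ne'⟩
  have hf : ∀ w ∈ rels, FreeGroup.lift
      (fun i : Fin 2 => if i = 0 then (1 : Multiplicative (ZMod d))
        else Multiplicative.ofAdd (1 : ZMod d)) w = 1 := by
    intro w hw
    rw [hrels] at hw
    rcases hw with rfl | hw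
    · rw [map_pow, FreeGroup.lift_apply_of]
      simp
    · rcases hw with rfl | hw
      · rw [map_pow, FreeGroup.lift_apply_of]
        simp only [if_neg (by decide : (1 : Fin 2) ≠ 0)]
        have : ((Multiplicative.ofAdd (1 : ZMod d)) ^ n) = Multiplicative.ofAdd ((n : ZMod d)) := by
          rw [← ofAdd_nsmul]
          congr 1
          simp [nsmul_eq_mul]
        rw [this, (ZMod.natCast_eq_zero_iff n d).2 hdn]
        rfl
      · rcases hw with rfl
        rw [map_mul, map_mul, map_inv, map_inv, map_zpow, FreeGroup.lift_apply_of, FreeGroup.lift_apply_of]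
        simp
  set φ := PresentedGroup.toGroup hf with hφ
  have hφA : φ A = 1 := by
    rw [hA, PresentedGroup.toGroup.of]
    simp
  have hφB : φ B = Multiplicative.ofAdd (1 : ZMod d) := by
    rw [hB, PresentedGroup.toGroup.of]
    simp
  have hker : H ≤ φ.ker := by
    rw [hH, Subgroup.closure_le]
    intro x hx
    rcases hx with rfl | hx
    · exact hφA
    · rcases hx with rfl
      show φ (B ^ d) = 1
      rw [map_pow, hφB, ← ofAdd_nsmul]
      have : (d • (1 : ZMod d)) = 0 := by
        simp [nsmul_eq_mul]
      rw [this]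
      rfl
  have hsurj : Function.Surjective φ := by
    intro y
    refine ⟨B ^ (Multiplicative.toAdd y).val, ?_⟩
    rw [map_pow, hφB, ← ofAdd_nsmul]
    have : ((Multiplicative.toAdd y).val • (1 : ZMod d)) = Multiplicative.toAdd y := by
      simp [nsmul_eq_mul]
    rw [this]
    rfl
  have hkerindex : φ.ker.index = d := by
    rw [Subgroup.index_ker, MonoidHom.range_eq_top.2 hsurj, Subgroup.card_top]
    calc Nat.card (Multiplicative (ZMod d)) = Nat.card (ZMod d) :=
          Nat.card_congr Multiplicative.toAdd
      _ = d := Nat.card_zmod d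
  have hlower : d ∣ H.index := hkerindex ▸ Subgroup.index_dvd_of_le hker
  exact ⟨hnorm, hcyc, Nat.dvd_antisymm hupper hlower⟩
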